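/- Let R₁, R₂ > 1 and let Aᵢ = {z ∈ ℂ : 1 < |z| < Rᵢ} for i = 1, 2 be open annuli. If there exists a holomorphic map f defined on A₁ (i.e. f : ℂ → ℂ differentiable at every point of A₁) that maps A₁ bijectively onto A₂, then R₁ = R₂. (Two round annuli with inner radius 1 are conformally equivalent if and only if their outer radii agree; this is the conformal rigidity of annuli underlying the normalization A_F = {1 < |z| < e^{R_F}}.) -/

import Mathlib

open Complex Set Bornology

lemma ann_isOpen (a b : ℝ) : IsOpen {z : ℂ | a < ‖z‖ ∧ ‖z‖ < b} := by
  have : {z : ℂ | a < ‖z‖ ∧ ‖z‖ < b} = (fun z : ℂ => ‖z‖) ⁻¹' (Ioo a b) := rfl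
  rw [this]; exact isOpen_Ioo.preimage continuous_norm

lemma ann_preconn (a b : ℝ) (ha : 0 ≤ a) :
    IsPreconnected {z : ℂ | a < ‖z‖ ∧ ‖z‖ < b} := by
  have h : {z : ℂ | a < ‖z‖ ∧ ‖z‖ < b} =
      (fun p : ℝ × ℝ => (p.1 : ℂ) * Complex.exp (p.2 * Complex.I)) '' (Ioo a b ×ˢ univ) := by
    ext z
    simp only [mem_image, mem_prod, mem_Ioo, mem_univ, and_true, mem_setOf_eq]
    constructor
    · rintro ⟨h1, h2⟩
      refine ⟨(‖z‖, Complex.arg z), ⟨h1, h2⟩, ?_⟩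
      simpa using Complex.norm_mul_exp_arg_mul_I z
    · rintro ⟨⟨r, θ⟩, ⟨h1, h2⟩, rfl⟩
      have : ‖(r : ℂ) * Complex.exp (θ * Complex.I)‖ = |r| := by
        simp [Complex.norm_exp]
      simp only at h1 h2 ⊢
      rw [this, _root_.abs_of_nonneg (le_trans ha h1.le)]
      exact ⟨h1, h2⟩
  rw [h]
  exact ((isPreconnected_Ioo.prod isPreconnected_univ)).image _
    (Continuous.continuousOn (by continuity))

lemma maxOnAnnulus {h : ℂ → ℂ} {r₀ r₁ C : ℝ} (h0 : 0 < r₀) (hrr : r₀ < r₁)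
    (hd : ∀ z : ℂ, r₀ ≤ ‖z‖ → ‖z‖ ≤ r₁ → DifferentiableAt ℂ h z)
    (hb : ∀ z : ℂ, ‖z‖ = r₀ ∨ ‖z‖ = r₁ → ‖h z‖ ≤ C) :
    ∀ z : ℂ, r₀ ≤ ‖z‖ → ‖z‖ ≤ r₁ → ‖h z‖ ≤ C := by
  intro z hz0 hz1
  set U : Set ℂ := {z : ℂ | r₀ < ‖z‖ ∧ ‖z‖ < r₁} with hU
  have hUopen : IsOpen U := by
    have : U = (fun z : ℂ => ‖z‖) ⁻¹' (Ioo r₀ r₁) := rfl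
    rw [this]; exact isOpen_Ioo.preimage continuous_norm
  have hclos : closure U ⊆ {z : ℂ | r₀ ≤ ‖z‖ ∧ ‖z‖ ≤ r₁} := by
    apply closure_minimal
    · exact fun w hw => ⟨hw.1.le, hw.2.le⟩
    · have : {z : ℂ | r₀ ≤ ‖z‖ ∧ ‖z‖ ≤ r₁} = (fun z : ℂ => ‖z‖) ⁻¹' (Icc r₀ r₁) := rfl
      rw [this]; exact isClosed_Icc.preimage continuous_norm
  have hbdd : IsBounded U := by
    apply (Metric.isBounded_closedBall (x := (0:ℂ)) (r := r₁)).subset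
    intro w hw
    simpa [Metric.mem_closedBall, Complex.dist_eq] using hw.2.le
  have hdc : DiffContOnCl ℂ h U := by
    refine ⟨fun w hw => (hd w hw.1.le hw.2.le).differentiableWithinAt, ?_⟩
    intro w hw
    exact ((hd w (hclos hw).1 (hclos hw).2).continuousAt).continuousWithinAt
  have hfr : ∀ w ∈ frontier U, ‖h w‖ ≤ C := by
    intro w hw
    have h1 := hclos (frontier_subset_closure hw)
    have h2 : w ∉ U := by
      rw [frontier, hUopen.interior_eq] at hw; exact hw.2
    rcases eq_or_lt_of_le h1.1 with he | hlt
    · exact hb w (Or.inl he.symm)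
    rcases eq_or_lt_of_le h1.2 with he | hlt2
    · exact hb w (Or.inr he)
    · exact absurd ⟨hlt, hlt2⟩ h2
  rcases eq_or_lt_of_le hz0 with he | h1
  · exact hb z (Or.inl he.symm)
  rcases eq_or_lt_of_le hz1 with he | h2
  · exact hb z (Or.inr he)
  exact Complex.norm_le_of_forall_mem_frontier_norm_le hbdd hdc hfr
    (subset_closure (⟨h1, h2⟩ : z ∈ U))

lemma powIneq (R₁ R₂ : ℝ) (hR₁ : 1 < R₁) (hR₂ : 1 < R₂) (f : ℂ → ℂ)
    (hf : ∀ z ∈ {z : ℂ | 1 < ‖z‖ ∧ ‖z‖ < R₁}, DifferentiableAt ℂ f z)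
    (hmaps : Set.MapsTo f {z : ℂ | 1 < ‖z‖ ∧ ‖z‖ < R₁} {z : ℂ | 1 < ‖z‖ ∧ ‖z‖ < R₂})
    (hinner : ∀ ε > 0, ∃ δ > 0, ∀ z ∈ {z : ℂ | 1 < ‖z‖ ∧ ‖z‖ < R₁},
      ‖z‖ < 1 + δ → ‖f z‖ < 1 + ε)
    (z₀ : ℂ) (hz₀ : z₀ ∈ {z : ℂ | 1 < ‖z‖ ∧ ‖z‖ < R₁})
    (p q : ℕ) (hp : 0 < p) (hq : 0 < q) (hpq : R₂ ^ p ≤ R₁ ^ q) :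
    ‖f z₀‖ ^ p ≤ ‖z₀‖ ^ q := by
  by_contra hcon
  push_neg at hcon
  set L : ℝ := ‖f z₀‖ ^ p with hL
  set M : ℝ := ‖z₀‖ ^ q with hM
  have hM1 : 1 < M := one_lt_pow₀ hz₀.1 hq.ne'
  have hM0 : 0 < M := lt_trans one_pos hM1
  have hL0 : 0 < L := by
    have : (1:ℝ) < ‖f z₀‖ := (hmaps hz₀).1
    positivity
  have hLM : 1 < L / M := (one_lt_div hM0).2 hcon
  set x : ℝ := (L / M) ^ ((p : ℝ)⁻¹) with hx
  have hx1 : 1 < x :=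
    (Real.one_lt_rpow_iff_of_pos (lt_trans one_pos hLM)).2 (Or.inl ⟨hLM, by positivity⟩)
  set ε : ℝ := (x - 1) / 2 with hε
  have hε0 : 0 < ε := by rw [hε]; linarith
  have h1ε : 1 + ε < x := by rw [hε]; linarith
  have hxp : x ^ p = L / M := by
    rw [← Real.rpow_natCast x p, hx, ← Real.rpow_mul (by positivity),
      inv_mul_cancel₀ (by positivity), Real.rpow_one]
  have hεp : (1 + ε) ^ p < L / M := by
    rw [← hxp]
    exact pow_lt_pow_left₀ h1ε (by positivity) hp.ne'
  obtain ⟨δ, hδ0, hδ⟩ := hinner ε hε0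
  set r₀ : ℝ := (1 + min (1 + δ) ‖z₀‖) / 2 with hr₀
  have hmin1 : 1 < min (1 + δ) ‖z₀‖ := lt_min (by linarith) hz₀.1
  have hr₀1 : 1 < r₀ := by rw [hr₀]; linarith
  have hr₀δ : r₀ < 1 + δ := by
    have h1 : min (1 + δ) ‖z₀‖ ≤ 1 + δ := min_le_left _ _
    rw [hr₀]; linarith
  have hr₀z : r₀ < ‖z₀‖ := by
    have h1 : min (1 + δ) ‖z₀‖ ≤ ‖z₀‖ := min_le_right _ _
    have h2 : 1 < ‖z₀‖ := hz₀.1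
    rw [hr₀]; linarith
  set t : ℝ := (R₂ ^ p * M / L) ^ ((q : ℝ)⁻¹) with ht
  have htR : t < R₁ := by
    have h1 : R₂ ^ p * M / L < R₁ ^ q := by
      have h2 : R₂ ^ p * (M / L) < R₂ ^ p * 1 := by
        apply mul_lt_mul_of_pos_left _ (by positivity)
        rw [div_lt_one hL0]; exact hcon
      calc R₂ ^ p * M / L = R₂ ^ p * (M / L) := by ring
        _ < R₂ ^ p * 1 := h2
        _ = R₂ ^ p := by ring
        _ ≤ R₁ ^ q := hpq
    calc t < (R₁ ^ q) ^ ((q : ℝ)⁻¹) :=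
          Real.rpow_lt_rpow (by positivity) h1 (by positivity)
      _ = R₁ := by
          rw [← Real.rpow_natCast R₁ q, ← Real.rpow_mul (by positivity),
            mul_inv_cancel₀ (by positivity), Real.rpow_one]
  set r₁ : ℝ := (max t ‖z₀‖ + R₁) / 2 with hr₁
  have hr₁R : r₁ < R₁ := by
    have h1 : max t ‖z₀‖ < R₁ := max_lt htR hz₀.2
    rw [hr₁]; linarith
  have hr₁z : ‖z₀‖ < r₁ := by
    have h1 : ‖z₀‖ ≤ max t ‖z₀‖ := le_max_right _ _
    have h2 : ‖z₀‖ < R₁ := hz₀.2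
    rw [hr₁]; linarith
  have hr₁t : t < r₁ := by
    have h1 : t ≤ max t ‖z₀‖ := le_max_left _ _
    rw [hr₁]; linarith
  have hr₁0 : 0 < r₁ := lt_trans (lt_trans (lt_trans one_pos hr₀1) hr₀z) hr₁z
  have hr₁q : R₂ ^ p * M / L < r₁ ^ q := by
    have ht0 : 0 ≤ t := Real.rpow_nonneg (by positivity) _
    have h1 : t ^ q = R₂ ^ p * M / L := by
      rw [← Real.rpow_natCast t q, ht, ← Real.rpow_mul (by positivity),
        inv_mul_cancel₀ (by positivity), Real.rpow_one]
    rw [← h1]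
    exact pow_lt_pow_left₀ hr₁t ht0 hq.ne'
  set C : ℝ := max ((1 + ε) ^ p) (R₂ ^ p / r₁ ^ q) with hC
  have hr₀r₁ : r₀ < r₁ := lt_trans hr₀z hr₁z
  have hsub : ∀ z : ℂ, r₀ ≤ ‖z‖ → ‖z‖ ≤ r₁ → z ∈ {z : ℂ | 1 < ‖z‖ ∧ ‖z‖ < R₁} :=
    fun z h1 h2 => ⟨lt_of_lt_of_le hr₀1 h1, lt_of_le_of_lt h2 hr₁R⟩
  have key := maxOnAnnulus (h := fun z => f z ^ p / z ^ q) (C := C)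
    (lt_trans one_pos hr₀1) hr₀r₁
    (fun z h1 h2 => by
      have hz : z ≠ 0 := by
        intro h; rw [h] at h1; simp at h1; linarith
      exact ((hf z (hsub z h1 h2)).pow p).div ((differentiableAt_id.pow q)) (pow_ne_zero q hz))
    (fun z hz => by
      have hnorm : ‖f z ^ p / z ^ q‖ = ‖f z‖ ^ p / ‖z‖ ^ q := by
        rw [norm_div, norm_pow, norm_pow]
      rcases hz with hz | hz
      · have hzA := hsub z (le_of_eq hz.symm) (by rw [hz]; exact hr₀r₁.le)
        have hfz : ‖f z‖ < 1 + ε := hδ z hzA (by rw [hz]; exact hr₀δ)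
        have h2 : ‖f z‖ ^ p ≤ (1 + ε) ^ p := pow_le_pow_left₀ (norm_nonneg _) hfz.le p
        have h3 : (1:ℝ) ≤ ‖z‖ ^ q := one_le_pow₀ (by rw [hz]; exact hr₀1.le)
        rw [hnorm]
        calc ‖f z‖ ^ p / ‖z‖ ^ q ≤ ‖f z‖ ^ p := div_le_self (by positivity) h3
          _ ≤ (1 + ε) ^ p := h2
          _ ≤ C := le_max_left _ _
      · have hzA := hsub z (by rw [hz]; exact hr₀r₁.le) (le_of_eq hz)
        have hfz : ‖f z‖ < R₂ := (hmaps hzA).2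
        have h2 : ‖f z‖ ^ p ≤ R₂ ^ p := pow_le_pow_left₀ (norm_nonneg _) hfz.le p
        rw [hnorm, hz]
        calc ‖f z‖ ^ p / r₁ ^ q ≤ R₂ ^ p / r₁ ^ q := by
              gcongr
          _ ≤ C := le_max_right _ _)
  have hfin := key z₀ hr₀z.le hr₁z.le
  have hnorm : ‖f z₀ ^ p / z₀ ^ q‖ = L / M := by rw [norm_div, norm_pow, norm_pow]
  rw [hnorm] at hfin
  have hC2 : R₂ ^ p / r₁ ^ q < L / M := by
    rw [div_lt_div_iff₀ (by positivity) hM0]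
    have := (div_lt_iff₀ hL0).1 hr₁q
    nlinarith [this]
  have hC1 : C < L / M := max_lt hεp hC2
  linarith

lemma powIneq2 (R₁ R₂ : ℝ) (hR₁ : 1 < R₁) (hR₂ : 1 < R₂) (f : ℂ → ℂ)
    (hf : ∀ z ∈ {z : ℂ | 1 < ‖z‖ ∧ ‖z‖ < R₁}, DifferentiableAt ℂ f z)
    (hmaps : Set.MapsTo f {z : ℂ | 1 < ‖z‖ ∧ ‖z‖ < R₁} {z : ℂ | 1 < ‖z‖ ∧ ‖z‖ < R₂})
    (houter : ∀ ε > 0, ∃ δ > 0, ∀ z ∈ {z : ℂ | 1 < ‖z‖ ∧ ‖z‖ < R₁},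
      R₁ - δ < ‖z‖ → R₂ - ε < ‖f z‖)
    (z₀ : ℂ) (hz₀ : z₀ ∈ {z : ℂ | 1 < ‖z‖ ∧ ‖z‖ < R₁})
    (p q : ℕ) (hp : 0 < p) (hpq : R₁ ^ q ≤ R₂ ^ p) :
    ‖z₀‖ ^ q ≤ ‖f z₀‖ ^ p := by
  rcases Nat.eq_zero_or_pos q with hq | hq
  · rw [hq, pow_zero]
    exact one_le_pow₀ (hmaps hz₀).1.le
  by_contra hcon
  push_neg at hcon
  set L : ℝ := ‖f z₀‖ ^ p with hL
  set M : ℝ := ‖z₀‖ ^ q with hM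
  have hM0 : 0 < M := by have := hz₀.1; positivity
  have hL0 : 0 < L := by
    have : (1:ℝ) < ‖f z₀‖ := (hmaps hz₀).1
    positivity
  have hML : 1 < M / L := (one_lt_div hL0).2 hcon
  -- r₀
  set t₀ : ℝ := (M / L) ^ ((q : ℝ)⁻¹) with ht₀
  have ht₀1 : 1 < t₀ :=
    (Real.one_lt_rpow_iff_of_pos (lt_trans one_pos hML)).2 (Or.inl ⟨hML, by positivity⟩)
  set r₀ : ℝ := (1 + min t₀ ‖z₀‖) / 2 with hr₀
  have hmin1 : 1 < min t₀ ‖z₀‖ := lt_min ht₀1 hz₀.1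
  have hr₀1 : 1 < r₀ := by rw [hr₀]; linarith
  have hr₀t : r₀ < t₀ := by
    have h1 : min t₀ ‖z₀‖ ≤ t₀ := min_le_left _ _
    rw [hr₀]; linarith
  have hr₀z : r₀ < ‖z₀‖ := by
    have h1 : min t₀ ‖z₀‖ ≤ ‖z₀‖ := min_le_right _ _
    have h2 : 1 < ‖z₀‖ := hz₀.1
    rw [hr₀]; linarith
  have hr₀q : r₀ ^ q < M / L := by
    have h1 : t₀ ^ q = M / L := by
      rw [← Real.rpow_natCast t₀ q, ht₀, ← Real.rpow_mul (by positivity),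
        inv_mul_cancel₀ (by positivity), Real.rpow_one]
    rw [← h1]
    exact pow_lt_pow_left₀ hr₀t (by linarith) hq.ne'
  -- ε
  set c : ℝ := R₁ ^ q * L / M with hc
  have hc0 : 0 < c := by positivity
  have hcR : c < R₂ ^ p := by
    have h2 : R₁ ^ q * (L / M) < R₁ ^ q * 1 := by
      apply mul_lt_mul_of_pos_left _ (by positivity)
      rw [div_lt_one hM0]; exact hcon
    calc c = R₁ ^ q * (L / M) := by rw [hc]; ring
      _ < R₁ ^ q * 1 := h2
      _ = R₁ ^ q := by ring
      _ ≤ R₂ ^ p := hpq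
  set d : ℝ := (max c 1) ^ ((p : ℝ)⁻¹) with hd
  have hd1 : 1 ≤ d := Real.one_le_rpow (le_max_right _ _) (by positivity)
  have hdR : d < R₂ := by
    have h1 : max c 1 < R₂ ^ p := max_lt hcR (one_lt_pow₀ hR₂ hp.ne')
    calc d < (R₂ ^ p) ^ ((p : ℝ)⁻¹) :=
          Real.rpow_lt_rpow (by positivity) h1 (by positivity)
      _ = R₂ := by
          rw [← Real.rpow_natCast R₂ p, ← Real.rpow_mul (by positivity),
            mul_inv_cancel₀ (by positivity), Real.rpow_one]
  set ε : ℝ := (R₂ - d) / 2 with hε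
  have hε0 : 0 < ε := by rw [hε]; linarith
  have hdε : d < R₂ - ε := by rw [hε]; linarith
  have hεc : c < (R₂ - ε) ^ p := by
    have h1 : d ^ p = max c 1 := by
      rw [← Real.rpow_natCast d p, hd, ← Real.rpow_mul (by positivity),
        inv_mul_cancel₀ (by positivity), Real.rpow_one]
    calc c ≤ max c 1 := le_max_left _ _
      _ = d ^ p := h1.symm
      _ < (R₂ - ε) ^ p := pow_lt_pow_left₀ hdε (by linarith) hp.ne'
  have hRε1 : 1 ≤ R₂ - ε := le_trans hd1 hdε.le
  obtain ⟨δ, hδ0, hδ⟩ := houter ε hε0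
  -- r₁
  set r₁ : ℝ := (max ‖z₀‖ (R₁ - δ) + R₁) / 2 with hr₁
  have hr₁R : r₁ < R₁ := by
    have h1 : max ‖z₀‖ (R₁ - δ) < R₁ := max_lt hz₀.2 (by linarith)
    rw [hr₁]; linarith
  have hr₁z : ‖z₀‖ < r₁ := by
    have h1 : ‖z₀‖ ≤ max ‖z₀‖ (R₁ - δ) := le_max_left _ _
    have h2 : ‖z₀‖ < R₁ := hz₀.2
    rw [hr₁]; linarith
  have hr₁δ : R₁ - δ < r₁ := by
    have h1 : R₁ - δ ≤ max ‖z₀‖ (R₁ - δ) := le_max_right _ _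
    have h2 : R₁ - δ < R₁ := by linarith
    rw [hr₁]; linarith
  have hr₁C : r₁ ^ q / (R₂ - ε) ^ p < M / L := by
    rw [div_lt_div_iff₀ (pow_pos (by linarith) p) hL0]
    have h1 : r₁ ^ q ≤ R₁ ^ q :=
      pow_le_pow_left₀ (by linarith [hr₀z, hr₀1, hr₁z]) hr₁R.le q
    have h2 : R₁ ^ q * L < (R₂ - ε) ^ p * M := by
      have h3 := mul_lt_mul_of_pos_right hεc hM0
      have h4 : c * M = R₁ ^ q * L := by rw [hc]; field_simp
      linarith
    have h5 : r₁ ^ q * L ≤ R₁ ^ q * L := mul_le_mul_of_nonneg_right h1 hL0.le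
    linarith
  set C : ℝ := max (r₀ ^ q) (r₁ ^ q / (R₂ - ε) ^ p) with hC
  have hr₀r₁ : r₀ < r₁ := lt_trans hr₀z hr₁z
  have hsub : ∀ z : ℂ, r₀ ≤ ‖z‖ → ‖z‖ ≤ r₁ → z ∈ {z : ℂ | 1 < ‖z‖ ∧ ‖z‖ < R₁} :=
    fun z h1 h2 => ⟨lt_of_lt_of_le hr₀1 h1, lt_of_le_of_lt h2 hr₁R⟩
  have key := maxOnAnnulus (h := fun z => z ^ q / f z ^ p) (C := C)
    (lt_trans one_pos hr₀1) hr₀r₁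
    (fun z h1 h2 => by
      have hfz : f z ≠ 0 := by
        intro h
        have := (hmaps (hsub z h1 h2)).1
        rw [h] at this; norm_num at this
      exact (differentiableAt_id.pow q).div ((hf z (hsub z h1 h2)).pow p) (pow_ne_zero p hfz))
    (fun z hz => by
      have hnorm : ‖z ^ q / f z ^ p‖ = ‖z‖ ^ q / ‖f z‖ ^ p := by
        rw [norm_div, norm_pow, norm_pow]
      rcases hz with hz | hz
      · have hzA := hsub z (le_of_eq hz.symm) (by rw [hz]; exact hr₀r₁.le)
        have h3 : (1:ℝ) ≤ ‖f z‖ ^ p := one_le_pow₀ (hmaps hzA).1.le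
        rw [hnorm, hz]
        calc r₀ ^ q / ‖f z‖ ^ p ≤ r₀ ^ q := div_le_self (by positivity) h3
          _ ≤ C := le_max_left _ _
      · have hzA := hsub z (by rw [hz]; exact hr₀r₁.le) (le_of_eq hz)
        have hfz : R₂ - ε < ‖f z‖ := hδ z hzA (by rw [hz]; exact hr₁δ)
        have h2 : (R₂ - ε) ^ p ≤ ‖f z‖ ^ p := pow_le_pow_left₀ (by linarith) hfz.le p
        rw [hnorm, hz]
        calc r₁ ^ q / ‖f z‖ ^ p ≤ r₁ ^ q / (R₂ - ε) ^ p :=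
              div_le_div_of_nonneg_left (by positivity) (pow_pos (by linarith) p) h2
          _ ≤ C := le_max_right _ _)
  have hfin := key z₀ hr₀z.le hr₁z.le
  have hnorm : ‖z₀ ^ q / f z₀ ^ p‖ = M / L := by rw [norm_div, norm_pow, norm_pow]
  rw [hnorm] at hfin
  have hC1 : C < M / L := max_lt hr₀q hr₁C
  linarith

lemma normEq (R₁ R₂ : ℝ) (hR₁ : 1 < R₁) (hR₂ : 1 < R₂) (f : ℂ → ℂ)
    (hf : ∀ z ∈ {z : ℂ | 1 < ‖z‖ ∧ ‖z‖ < R₁}, DifferentiableAt ℂ f z)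
    (hmaps : Set.MapsTo f {z : ℂ | 1 < ‖z‖ ∧ ‖z‖ < R₁} {z : ℂ | 1 < ‖z‖ ∧ ‖z‖ < R₂})
    (hinner : ∀ ε > 0, ∃ δ > 0, ∀ z ∈ {z : ℂ | 1 < ‖z‖ ∧ ‖z‖ < R₁},
      ‖z‖ < 1 + δ → ‖f z‖ < 1 + ε)
    (houter : ∀ ε > 0, ∃ δ > 0, ∀ z ∈ {z : ℂ | 1 < ‖z‖ ∧ ‖z‖ < R₁},
      R₁ - δ < ‖z‖ → R₂ - ε < ‖f z‖)
    (z₀ : ℂ) (hz₀ : z₀ ∈ {z : ℂ | 1 < ‖z‖ ∧ ‖z‖ < R₁}) :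
    Real.log ‖f z₀‖ = (Real.log R₂ / Real.log R₁) * Real.log ‖z₀‖ := by
  set s : ℝ := Real.log R₂ / Real.log R₁ with hs
  have hlR₁ : 0 < Real.log R₁ := Real.log_pos hR₁
  have hlR₂ : 0 < Real.log R₂ := Real.log_pos hR₂
  have hs0 : 0 < s := div_pos hlR₂ hlR₁
  have hz1 : (1:ℝ) < ‖z₀‖ := hz₀.1
  have hlz : 0 < Real.log ‖z₀‖ := Real.log_pos hz1
  have hfz1 : (1:ℝ) < ‖f z₀‖ := (hmaps hz₀).1
  have hlfz : 0 < Real.log ‖f z₀‖ := Real.log_pos hfz1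
  -- upper bound
  have hup : ∀ p : ℕ, 0 < p →
      Real.log ‖f z₀‖ ≤ s * Real.log ‖z₀‖ + Real.log ‖z₀‖ / p := by
    intro p hp
    set q : ℕ := ⌈(p : ℝ) * s⌉₊ with hqdef
    have hps0 : 0 < (p : ℝ) * s := by positivity
    have hq : 0 < q := Nat.ceil_pos.2 hps0
    have hle : (p : ℝ) * s ≤ q := Nat.le_ceil _
    have hqlt : (q : ℝ) < (p : ℝ) * s + 1 := by
      have := Nat.ceil_lt_add_one hps0.le
      exact_mod_cast this
    have hpq : R₂ ^ p ≤ R₁ ^ q := by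
      rw [← Real.log_le_log_iff (by positivity) (by positivity),
        Real.log_pow, Real.log_pow]
      calc (p : ℝ) * Real.log R₂ = ((p : ℝ) * s) * Real.log R₁ := by
            rw [hs]; field_simp
        _ ≤ (q : ℝ) * Real.log R₁ := by
            exact mul_le_mul_of_nonneg_right hle hlR₁.le
    have key := powIneq R₁ R₂ hR₁ hR₂ f hf hmaps hinner z₀ hz₀ p q hp hq hpq
    have hlog : (p : ℝ) * Real.log ‖f z₀‖ ≤ (q : ℝ) * Real.log ‖z₀‖ := by
      rw [← Real.log_pow, ← Real.log_pow]
      exact Real.log_le_log (by positivity) key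
    have h2 : (q : ℝ) * Real.log ‖z₀‖ ≤ ((p : ℝ) * s + 1) * Real.log ‖z₀‖ :=
      mul_le_mul_of_nonneg_right hqlt.le hlz.le
    have hp0 : (0:ℝ) < p := by exact_mod_cast hp
    rw [div_eq_inv_mul, ← mul_le_mul_iff_right₀ hp0]
    calc (p:ℝ) * Real.log ‖f z₀‖ ≤ ((p : ℝ) * s + 1) * Real.log ‖z₀‖ := le_trans hlog h2
      _ = (p:ℝ) * (s * Real.log ‖z₀‖ + (p:ℝ)⁻¹ * Real.log ‖z₀‖) := by
          field_simp
  -- lower bound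
  have hlo : ∀ p : ℕ, 0 < p →
      s * Real.log ‖z₀‖ - Real.log ‖z₀‖ / p ≤ Real.log ‖f z₀‖ := by
    intro p hp
    set q : ℕ := ⌊(p : ℝ) * s⌋₊ with hqdef
    have hps0 : 0 < (p : ℝ) * s := by positivity
    have hle : (q : ℝ) ≤ (p : ℝ) * s := Nat.floor_le hps0.le
    have hgt : (p : ℝ) * s - 1 < (q : ℝ) := by
      have := Nat.lt_floor_add_one ((p : ℝ) * s)
      linarith
    have hpq : R₁ ^ q ≤ R₂ ^ p := by
      rw [← Real.log_le_log_iff (by positivity) (by positivity),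
        Real.log_pow, Real.log_pow]
      calc (q : ℝ) * Real.log R₁ ≤ ((p : ℝ) * s) * Real.log R₁ :=
            mul_le_mul_of_nonneg_right hle hlR₁.le
        _ = (p : ℝ) * Real.log R₂ := by rw [hs]; field_simp
    have key := powIneq2 R₁ R₂ hR₁ hR₂ f hf hmaps houter z₀ hz₀ p q hp hpq
    have hlog : (q : ℝ) * Real.log ‖z₀‖ ≤ (p : ℝ) * Real.log ‖f z₀‖ := by
      rw [← Real.log_pow, ← Real.log_pow]
      exact Real.log_le_log (by positivity) key
    have h2 : ((p : ℝ) * s - 1) * Real.log ‖z₀‖ ≤ (q : ℝ) * Real.log ‖z₀‖ :=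
      mul_le_mul_of_nonneg_right hgt.le hlz.le
    have hp0 : (0:ℝ) < p := by exact_mod_cast hp
    rw [div_eq_inv_mul, ← sub_nonneg]
    have h3 : ((p : ℝ) * s - 1) * Real.log ‖z₀‖ ≤ (p : ℝ) * Real.log ‖f z₀‖ :=
      le_trans h2 hlog
    have h4 : (p:ℝ) * (Real.log ‖f z₀‖ - (s * Real.log ‖z₀‖ - (p:ℝ)⁻¹ * Real.log ‖z₀‖)) =
        (p : ℝ) * Real.log ‖f z₀‖ - ((p : ℝ) * s - 1) * Real.log ‖z₀‖ := by
      field_simp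
    nlinarith [h3, hp0]
  -- combine
  have hfin : ∀ c : ℝ, 0 < c → |Real.log ‖f z₀‖ - s * Real.log ‖z₀‖| ≤ c := by
    intro c hc
    obtain ⟨p, hp⟩ := exists_nat_gt (Real.log ‖z₀‖ / c)
    have hp0 : 0 < p := by
      rcases Nat.eq_zero_or_pos p with h | h
      · exfalso
        rw [h] at hp
        have := div_pos hlz hc
        rw [Nat.cast_zero] at hp
        linarith
      · exact h
    have hpc : Real.log ‖z₀‖ / p ≤ c := by
      rw [div_le_iff₀ (by exact_mod_cast hp0)]
      rw [div_lt_iff₀ hc] at hp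
      nlinarith [hp, hc]
    have h1 := hup p hp0
    have h2 := hlo p hp0
    rw [abs_le]
    constructor <;> linarith
  have habs : |Real.log ‖f z₀‖ - s * Real.log ‖z₀‖| ≤ 0 := by
    apply le_of_forall_pos_le_add
    intro ε hε
    simpa using hfin ε hε
  have := abs_nonpos_iff.1 habs
  linarith [sub_eq_zero.1 this]

lemma derivEq (R₁ : ℝ) (f : ℂ → ℂ) (s : ℝ)
    (hf : ∀ z ∈ {z : ℂ | 1 < ‖z‖ ∧ ‖z‖ < R₁}, DifferentiableAt ℂ f z)
    (hfne : ∀ z ∈ {z : ℂ | 1 < ‖z‖ ∧ ‖z‖ < R₁}, f z ≠ 0)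
    (hnorm : ∀ z ∈ {z : ℂ | 1 < ‖z‖ ∧ ‖z‖ < R₁},
      Real.log ‖f z‖ = s * Real.log ‖z‖) :
    ∀ z ∈ {z : ℂ | 1 < ‖z‖ ∧ ‖z‖ < R₁}, z * deriv f z = (s : ℂ) * f z := by
  intro z₀ hz₀
  set A : Set ℂ := {z : ℂ | 1 < ‖z‖ ∧ ‖z‖ < R₁} with hA
  have hAopen : IsOpen A := by
    have : A = (fun z : ℂ => ‖z‖) ⁻¹' (Ioo 1 R₁) := rfl
    rw [this]; exact isOpen_Ioo.preimage continuous_norm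
  have hD := (hf z₀ hz₀).hasDerivAt
  set D : ℂ := deriv f z₀ with hDdef
  set w₀ : ℂ := f z₀ with hw₀
  have hw₀ne : w₀ ≠ 0 := hfne z₀ hz₀
  -- generic directional computation
  have main : ∀ v : ℂ, v ≠ 0 →
      (∀ᶠ t : ℝ in nhds 0, z₀ * Complex.exp (v * t) ∈ A) →
      ∀ c : ℝ, (∀ᶠ t : ℝ in nhds 0,
        Real.log ‖f (z₀ * Complex.exp (v * t))‖ - Real.log ‖w₀‖ = c * t) →
      (D * (z₀ * v) / w₀).re = c := by
    intro v hv hev c hevc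
    -- curve
    have hinner : HasDerivAt (fun w : ℂ => z₀ * Complex.exp (v * w)) (z₀ * v) 0 := by
      have h1 : HasDerivAt (fun w : ℂ => Complex.exp (v * w)) (Complex.exp (v * 0) * v) 0 := by
        have h2 : HasDerivAt (fun w : ℂ => v * w) v 0 := by
          simpa using (hasDerivAt_id (0:ℂ)).const_mul v
        simpa [Function.comp_def] using (Complex.hasDerivAt_exp (v * 0)).comp 0 h2
      have h3 := h1.const_mul z₀
      simpa [mul_comm, mul_assoc] using h3
    have hD' : HasDerivAt f D (z₀ * Complex.exp (v * (0:ℂ))) := by simpa using hD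
    have hΨ : HasDerivAt (fun w : ℂ => f (z₀ * Complex.exp (v * w))) (D * (z₀ * v)) 0 := by
      simpa [Function.comp_def] using hD'.comp 0 hinner
    have hψ : HasDerivAt (fun t : ℝ => f (z₀ * Complex.exp (v * t))) (D * (z₀ * v)) 0 :=
      hΨ.comp_ofReal
    -- log of quotient
    have hdiv : HasDerivAt (fun t : ℝ => f (z₀ * Complex.exp (v * t)) / w₀)
        (D * (z₀ * v) / w₀) 0 := hψ.div_const w₀
    have hval : f (z₀ * Complex.exp (v * ((0:ℝ):ℂ))) / w₀ = 1 := by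
      rw [Complex.ofReal_zero, mul_zero, Complex.exp_zero, mul_one, ← hw₀, div_self hw₀ne]
    have hχ : HasDerivAt (fun t : ℝ => Complex.log (f (z₀ * Complex.exp (v * t)) / w₀))
        (D * (z₀ * v) / w₀) 0 := by
      have := hdiv.clog_real (by rw [hval]; exact Complex.one_mem_slitPlane)
      simpa [← hw₀, div_self hw₀ne] using this
    -- real part
    have hre : HasDerivAt (fun t : ℝ =>
        (Complex.log (f (z₀ * Complex.exp (v * t)) / w₀)).re)
        ((D * (z₀ * v) / w₀).re) 0 := by
      have := (Complex.reCLM.hasFDerivAt.comp_hasDerivAt 0 hχ)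
      exact this
    -- eventual identification
    have heq : (fun t : ℝ => (Complex.log (f (z₀ * Complex.exp (v * t)) / w₀)).re)
        =ᶠ[nhds (0:ℝ)] (fun t => c * t) := by
      filter_upwards [hev, hevc] with t ht htc
      rw [Complex.log_re]
      have hne : f (z₀ * Complex.exp (v * t)) ≠ 0 := hfne _ ht
      rw [norm_div, Real.log_div (by simpa using hne) (by simpa using hw₀ne)]
      simpa using htc
    have hre' : HasDerivAt (fun t : ℝ => c * t) ((D * (z₀ * v) / w₀).re) 0 :=
      hre.congr_of_eventuallyEq heq.symm
    have : HasDerivAt (fun t : ℝ => c * t) c 0 := by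
      simpa using (hasDerivAt_id (0:ℝ)).const_mul c
    exact hre'.unique this
  have hcont : ∀ v : ℂ, Continuous fun t : ℝ => z₀ * Complex.exp (v * t) :=
    fun v => continuous_const.mul (Complex.continuous_exp.comp
      (continuous_const.mul Complex.continuous_ofReal))
  -- apply with v = 1
  have hz₀A : z₀ ∈ A := hz₀
  have hz₀n : (1:ℝ) < ‖z₀‖ := hz₀.1
  have hz₀ne : ‖z₀‖ ≠ 0 := by positivity
  have hev1 : ∀ᶠ t : ℝ in nhds 0, z₀ * Complex.exp ((1:ℂ) * t) ∈ A := by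
    have hc := hcont 1
    have h0 : z₀ * Complex.exp ((1:ℂ) * ((0:ℝ):ℂ)) ∈ A := by simpa using hz₀A
    exact hc.continuousAt.preimage_mem_nhds (hAopen.mem_nhds h0)
  have hnorm1 : ∀ t : ℝ, ‖z₀ * Complex.exp ((1:ℂ) * t)‖ = ‖z₀‖ * Real.exp t := by
    intro t
    rw [norm_mul, Complex.norm_exp]
    norm_num
  have hc1 := main 1 one_ne_zero hev1 s (by
    filter_upwards [hev1] with t ht
    have h1 := hnorm _ ht
    have h2 := hnorm z₀ hz₀A
    rw [h1, h2, hnorm1 t, Real.log_mul hz₀ne (Real.exp_ne_zero t), Real.log_exp]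
    ring)
  -- apply with v = I
  have hevI : ∀ᶠ t : ℝ in nhds 0, z₀ * Complex.exp (Complex.I * t) ∈ A := by
    have hc := hcont Complex.I
    have h0 : z₀ * Complex.exp (Complex.I * ((0:ℝ):ℂ)) ∈ A := by simpa using hz₀A
    exact hc.continuousAt.preimage_mem_nhds (hAopen.mem_nhds h0)
  have hnormI : ∀ t : ℝ, ‖z₀ * Complex.exp (Complex.I * t)‖ = ‖z₀‖ := by
    intro t
    rw [norm_mul, Complex.norm_exp]
    simp
  have hcI := main Complex.I Complex.I_ne_zero hevI 0 (by
    filter_upwards [hevI] with t ht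
    have h1 := hnorm _ ht
    have h2 := hnorm z₀ hz₀A
    rw [h1, hnormI t, ← h2]
    ring)
  -- combine
  have hq : D * z₀ / w₀ = (s : ℂ) := by
    apply Complex.ext
    · simpa using hc1
    · have : (D * (z₀ * Complex.I) / w₀) = (D * z₀ / w₀) * Complex.I := by ring
      rw [this] at hcI
      simp only [Complex.mul_I_re] at hcI
      simpa using (neg_eq_zero.1 (by linarith [hcI] : -(D * z₀ / w₀).im = 0))
  have := (div_eq_iff hw₀ne).1 hq
  rw [hw₀] at this ⊢
  rw [hDdef] at this ⊢
  linear_combination this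

lemma sEqOne (R₁ : ℝ) (hR₁ : 1 < R₁) (f : ℂ → ℂ) (s : ℝ) (hs0 : 0 < s)
    (hf : ∀ z ∈ {z : ℂ | 1 < ‖z‖ ∧ ‖z‖ < R₁}, DifferentiableAt ℂ f z)
    (hfne : ∀ z ∈ {z : ℂ | 1 < ‖z‖ ∧ ‖z‖ < R₁}, f z ≠ 0)
    (hderiv : ∀ z ∈ {z : ℂ | 1 < ‖z‖ ∧ ‖z‖ < R₁}, z * deriv f z = (s : ℂ) * f z)
    (hinj : Set.InjOn f {z : ℂ | 1 < ‖z‖ ∧ ‖z‖ < R₁}) : s = 1 := by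
  set A : Set ℂ := {z : ℂ | 1 < ‖z‖ ∧ ‖z‖ < R₁} with hA
  set r : ℝ := (1 + R₁) / 2 with hr
  have hr1 : 1 < r := by rw [hr]; linarith
  have hrR : r < R₁ := by rw [hr]; linarith
  have hmem : ∀ θ : ℝ, (r : ℂ) * Complex.exp (Complex.I * θ) ∈ A := by
    intro θ
    have h1 : ‖(r : ℂ) * Complex.exp (Complex.I * θ)‖ = r := by
      rw [norm_mul, Complex.norm_exp]
      simp
      linarith
    exact ⟨by rw [h1]; exact hr1, by rw [h1]; exact hrR⟩
  set G : ℝ → ℂ := fun θ => f ((r : ℂ) * Complex.exp (Complex.I * θ)) *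
    Complex.exp (-(Complex.I * (s * θ))) with hG
  have hGderiv : ∀ θ : ℝ, HasDerivAt G 0 θ := by
    intro θ
    set z : ℂ := (r : ℂ) * Complex.exp (Complex.I * θ) with hz
    have hzA : z ∈ A := hmem θ
    -- inner curve derivative (complex)
    have hcurve : HasDerivAt (fun w : ℂ => (r : ℂ) * Complex.exp (Complex.I * w))
        (z * Complex.I) (θ : ℂ) := by
      have h2 : HasDerivAt (fun w : ℂ => Complex.I * w) Complex.I (θ : ℂ) := by
        simpa using (hasDerivAt_id ((θ : ℝ) : ℂ)).const_mul Complex.I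
      have h1 := (Complex.hasDerivAt_exp (Complex.I * θ)).comp (θ : ℂ) h2
      have h3 := h1.const_mul (r : ℂ)
      rw [hz]
      exact h3.congr_deriv (by ring)
    have hfz : HasDerivAt f (deriv f z) z := (hf z hzA).hasDerivAt
    have hcomp : HasDerivAt (fun w : ℂ => f ((r : ℂ) * Complex.exp (Complex.I * w)))
        (deriv f z * (z * Complex.I)) (θ : ℂ) := by
      have hfz' : HasDerivAt f (deriv f z)
          ((fun w : ℂ => (r : ℂ) * Complex.exp (Complex.I * w)) ((θ : ℝ) : ℂ)) := hfz
      have := hfz'.comp ((θ : ℝ) : ℂ) hcurve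
      simpa [Function.comp_def] using this
    have h1 : HasDerivAt (fun t : ℝ => f ((r : ℂ) * Complex.exp (Complex.I * t)))
        (deriv f z * (z * Complex.I)) θ := hcomp.comp_ofReal
    -- exp factor derivative
    have hexp : HasDerivAt (fun w : ℂ => Complex.exp (-(Complex.I * (s * w))))
        (Complex.exp (-(Complex.I * (s * θ))) * (-(Complex.I * s))) (θ : ℂ) := by
      have h2 : HasDerivAt (fun w : ℂ => -(Complex.I * (s * w))) (-(Complex.I * s)) (θ : ℂ) := by
        have := ((hasDerivAt_id ((θ : ℝ) : ℂ)).const_mul ((s : ℂ))).const_mul Complex.I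
        have h4 := this.neg
        exact h4.congr_deriv (by ring)
      simpa [Function.comp_def] using (Complex.hasDerivAt_exp _).comp (θ : ℂ) h2
    have h2 : HasDerivAt (fun t : ℝ => Complex.exp (-(Complex.I * (s * t))))
        (Complex.exp (-(Complex.I * (s * θ))) * (-(Complex.I * s))) θ := hexp.comp_ofReal
    have hprod := h1.mul h2
    have : G = fun t : ℝ => f ((r : ℂ) * Complex.exp (Complex.I * t)) *
        Complex.exp (-(Complex.I * (s * t))) := rfl
    rw [this]
    refine hprod.congr_deriv ?_
    have hd := hderiv z hzA
    rw [show deriv f z * (z * Complex.I) = (z * deriv f z) * Complex.I by ring, hd]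
    ring
  have hGconst : ∀ θ : ℝ, G θ = G 0 := by
    intro θ
    have hdiff : Differentiable ℝ G := fun t => (hGderiv t).differentiableAt
    exact is_const_of_deriv_eq_zero hdiff (fun t => (hGderiv t).deriv) θ 0
  have hG0 : G 0 = f ((r : ℂ)) := by
    rw [hG]; simp
  -- exp(2πis) = 1
  have h2π := hGconst (2 * Real.pi)
  have hfr : f ((r:ℂ) * Complex.exp (Complex.I * ((2 * Real.pi : ℝ) : ℂ))) = f (r:ℂ) := by
    congr 1
    rw [show (Complex.I * ((2 * Real.pi : ℝ) : ℂ)) = 2 * Real.pi * Complex.I by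
      push_cast; ring, Complex.exp_two_pi_mul_I, mul_one]
  rw [hG0, hG] at h2π
  beta_reduce at h2π
  rw [hfr] at h2π
  have hfrne : f (r:ℂ) ≠ 0 := by
    apply hfne
    constructor <;> simp [Complex.norm_real, abs_of_pos (by linarith : (0:ℝ) < r)] <;> linarith
  have hexp1 : Complex.exp (-(Complex.I * ((s:ℂ) * ((2 * Real.pi : ℝ) : ℂ)))) = 1 := by
    apply mul_left_cancel₀ hfrne
    rw [mul_one]
    convert h2π using 3
  obtain ⟨n, hn⟩ := Complex.exp_eq_one_iff.1 hexp1
  -- s = -n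
  have hsn : (s : ℝ) = -(n : ℝ) := by
    have him := congrArg Complex.im hn
    simp [Complex.mul_im, Complex.mul_re] at him
    have hπ : (0:ℝ) < Real.pi := Real.pi_pos
    nlinarith [him]
  -- integer m := -n ≥ 1
  by_contra hs1
  have hn1 : (1:ℝ) ≤ -(n:ℝ) := by
    have : (0:ℝ) < -(n:ℝ) := by rw [← hsn]; exact hs0
    have : (0:ℤ) < -n := by exact_mod_cast this
    have : (1:ℤ) ≤ -n := this
    exact_mod_cast this
  have hs2 : 2 ≤ s := by
    have : s ≠ 1 := hs1
    have h1 : (1:ℝ) ≤ s := by rw [hsn]; exact hn1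
    have : (1:ℤ) < -n := by
      rcases lt_or_eq_of_le ((by exact_mod_cast hn1) : (1:ℤ) ≤ -n) with h | h
      · exact h
      · exfalso; apply hs1; rw [hsn]; exact_mod_cast h.symm
    have : (2:ℤ) ≤ -n := this
    rw [hsn]; exact_mod_cast this
  -- contradiction with injectivity
  set θ₀ : ℝ := 2 * Real.pi / s with hθ₀
  have hπ : (0:ℝ) < Real.pi := Real.pi_pos
  have hθ₀pos : 0 < θ₀ := by rw [hθ₀]; positivity
  have hθ₀lt : θ₀ < 2 * Real.pi := by
    rw [hθ₀, div_lt_iff₀ hs0]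
    nlinarith
  have hGθ₀ := hGconst θ₀
  have hsθ₀ : s * θ₀ = 2 * Real.pi := by
    rw [hθ₀]; field_simp
  have hexpθ₀ : Complex.exp (-(Complex.I * ((s:ℂ) * ((θ₀:ℝ):ℂ)))) = 1 := by
    have h1 : ((s:ℂ) * ((θ₀:ℝ):ℂ)) = ((2 * Real.pi : ℝ) : ℂ) := by
      rw [← Complex.ofReal_mul]
      exact_mod_cast congrArg (fun x : ℝ => (x:ℂ)) hsθ₀
    rw [h1, show (-(Complex.I * ((2*Real.pi:ℝ):ℂ)) : ℂ) = (-1:ℤ) * (2*Real.pi*Complex.I) by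
      push_cast; ring]
    exact Complex.exp_int_mul_two_pi_mul_I (-1)
  rw [hG0, hG] at hGθ₀
  beta_reduce at hGθ₀
  rw [hexpθ₀, mul_one] at hGθ₀
  have heqz := hinj (hmem θ₀) (by
    constructor <;> simp [Complex.norm_real, abs_of_pos (by linarith : (0:ℝ) < r)] <;> linarith) hGθ₀
  -- r * exp(I θ₀) = r forces θ₀ ∈ 2πℤ
  have hrne : ((r:ℝ) : ℂ) ≠ 0 := by
    simp only [ne_eq, Complex.ofReal_eq_zero]
    linarith
  have hexpz : Complex.exp (Complex.I * θ₀) = 1 := by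
    apply mul_left_cancel₀ hrne
    rw [mul_one]
    exact heqz
  obtain ⟨k, hk⟩ := Complex.exp_eq_one_iff.1 hexpz
  have hθk : (θ₀ : ℝ) = k * (2 * Real.pi) := by
    have him := congrArg Complex.im hk
    simp [Complex.mul_im, Complex.mul_re] at him
    nlinarith [him]
  have hk0 : (0:ℝ) < k := by
    by_contra h
    push_neg at h
    have : (k:ℝ) * (2 * Real.pi) ≤ 0 := mul_nonpos_of_nonpos_of_nonneg h (by positivity)
    linarith [hθk ▸ hθ₀pos]
  have hk1 : (1:ℝ) ≤ k := by
    have : (0:ℤ) < k := by exact_mod_cast hk0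
    exact_mod_cast this
  nlinarith [hθk, hθ₀lt, hπ, hk1]

section
variable (R₁ R₂ : ℝ) (f : ℂ → ℂ)

lemma openMapF (hR₁ : 1 < R₁)
    (hf : ∀ z ∈ {z : ℂ | 1 < ‖z‖ ∧ ‖z‖ < R₁}, DifferentiableAt ℂ f z)
    (hinj : Set.InjOn f {z : ℂ | 1 < ‖z‖ ∧ ‖z‖ < R₁}) :
    ∀ s ⊆ {z : ℂ | 1 < ‖z‖ ∧ ‖z‖ < R₁}, IsOpen s → IsOpen (f '' s) := by
  set A : Set ℂ := {z : ℂ | 1 < ‖z‖ ∧ ‖z‖ < R₁} with hA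
  have hAopen : IsOpen A := by
    have : A = (fun z : ℂ => ‖z‖) ⁻¹' (Ioo 1 R₁) := rfl
    rw [this]; exact isOpen_Ioo.preimage continuous_norm
  have han : AnalyticOnNhd ℂ f A :=
    (DifferentiableOn.analyticOnNhd (fun z hz => (hf z hz).differentiableWithinAt) hAopen)
  rcases han.is_constant_or_isOpen (ann_preconn 1 R₁ zero_le_one) with ⟨w, hw⟩ | h
  · exfalso
    set r : ℝ := (1 + R₁) / 2 with hr
    have hr1 : 1 < r := by rw [hr]; linarith
    have hrR : r < R₁ := by rw [hr]; linarith
    have hrA : ((r:ℝ):ℂ) ∈ A := by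
      constructor <;>
        simp only [hA, mem_setOf_eq, Complex.norm_real, Real.norm_eq_abs,
          abs_of_pos (by linarith : (0:ℝ) < r)] <;> linarith
    have hnr : ‖(-(r:ℝ):ℂ)‖ = r := by
      rw [norm_neg, Complex.norm_real, Real.norm_eq_abs, abs_of_pos (by linarith : (0:ℝ) < r)]
    have hrA' : (-(r:ℝ):ℂ) ∈ A := by
      constructor <;> rw [hnr] <;> linarith
    have := hinj hrA hrA' (by rw [hw _ hrA, hw _ hrA'])
    have h2 : (r:ℝ) = -(r:ℝ) := by exact_mod_cast this
    linarith
  · exact h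

lemma contInvF (hR₁ : 1 < R₁) (hR₂ : 1 < R₂)
    (hf : ∀ z ∈ {z : ℂ | 1 < ‖z‖ ∧ ‖z‖ < R₁}, DifferentiableAt ℂ f z)
    (hbij : Set.BijOn f {z : ℂ | 1 < ‖z‖ ∧ ‖z‖ < R₁} {z : ℂ | 1 < ‖z‖ ∧ ‖z‖ < R₂}) :
    ∀ w ∈ {w : ℂ | 1 < ‖w‖ ∧ ‖w‖ < R₂},
      ContinuousAt (Function.invFunOn f {z : ℂ | 1 < ‖z‖ ∧ ‖z‖ < R₁}) w := by
  set A : Set ℂ := {z : ℂ | 1 < ‖z‖ ∧ ‖z‖ < R₁} with hA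
  set B : Set ℂ := {w : ℂ | 1 < ‖w‖ ∧ ‖w‖ < R₂} with hB
  set g := Function.invFunOn f A with hg
  have hAopen : IsOpen A := by
    have : A = (fun z : ℂ => ‖z‖) ⁻¹' (Ioo 1 R₁) := rfl
    rw [this]; exact isOpen_Ioo.preimage continuous_norm
  have hopen := openMapF R₁ f hR₁ hf hbij.injOn
  intro w₀ hw₀
  obtain ⟨z₀, hz₀, hfz₀⟩ := hbij.surjOn hw₀
  have hgw₀ : g w₀ = z₀ := by
    rw [hg, ← hfz₀]
    exact hbij.injOn.leftInvOn_invFunOn hz₀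
  rw [ContinuousAt, Filter.tendsto_def]
  intro U hU
  rw [hgw₀] at hU
  obtain ⟨V, hVU, hVopen, hz₀V⟩ := mem_nhds_iff.1 hU
  set V' := V ∩ A with hV'
  have hV'open : IsOpen V' := hVopen.inter hAopen
  have himg : IsOpen (f '' V') := hopen V' inter_subset_right hV'open
  have hw₀img : w₀ ∈ f '' V' := ⟨z₀, ⟨hz₀V, hz₀⟩, hfz₀⟩
  apply Filter.mem_of_superset (himg.mem_nhds hw₀img)
  rintro w ⟨z, hzV', rfl⟩
  have : g (f z) = z := hbij.injOn.leftInvOn_invFunOn hzV'.2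
  simp only [mem_preimage, this]
  exact hVU hzV'.1

lemma shellF (hR₁ : 1 < R₁) (hR₂ : 1 < R₂)
    (hf : ∀ z ∈ {z : ℂ | 1 < ‖z‖ ∧ ‖z‖ < R₁}, DifferentiableAt ℂ f z)
    (hbij : Set.BijOn f {z : ℂ | 1 < ‖z‖ ∧ ‖z‖ < R₁} {z : ℂ | 1 < ‖z‖ ∧ ‖z‖ < R₂}) :
    ∀ ε : ℝ, 0 < ε → 1 + ε < R₂ - ε → ∃ δ > 0, ∀ z ∈ {z : ℂ | 1 < ‖z‖ ∧ ‖z‖ < R₁},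
      (‖z‖ < 1 + δ ∨ R₁ - δ < ‖z‖) → (‖f z‖ < 1 + ε ∨ R₂ - ε < ‖f z‖) := by
  set A : Set ℂ := {z : ℂ | 1 < ‖z‖ ∧ ‖z‖ < R₁} with hA
  set B : Set ℂ := {w : ℂ | 1 < ‖w‖ ∧ ‖w‖ < R₂} with hB
  set g := Function.invFunOn f A with hg
  intro ε hε0 hεR
  set K : Set ℂ := {w : ℂ | 1 + ε ≤ ‖w‖ ∧ ‖w‖ ≤ R₂ - ε} with hK
  have hKB : K ⊆ B := fun w hw => ⟨by linarith [hw.1], by linarith [hw.2]⟩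
  have hKcompact : IsCompact K := by
    apply Metric.isCompact_of_isClosed_isBounded
    · have : K = (fun w : ℂ => ‖w‖) ⁻¹' (Icc (1 + ε) (R₂ - ε)) := rfl
      rw [this]; exact isClosed_Icc.preimage continuous_norm
    · apply (Metric.isBounded_closedBall (x := (0:ℂ)) (r := R₂ - ε)).subset
      intro w hw
      simpa [Metric.mem_closedBall, Complex.dist_eq] using hw.2
  have hgc : ContinuousOn g K := fun w hw =>
    (contInvF R₁ R₂ f hR₁ hR₂ hf hbij w (hKB hw)).continuousWithinAt
  set P : Set ℂ := g '' K with hP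
  have hPcompact : IsCompact P := hKcompact.image_of_continuousOn hgc
  have hPA : P ⊆ A := by
    rintro z ⟨w, hw, rfl⟩
    obtain ⟨a, ha, hfa⟩ := hbij.surjOn (hKB hw)
    exact Function.invFunOn_mem ⟨a, ha, hfa⟩
  rcases P.eq_empty_or_nonempty with hPe | hPne
  · refine ⟨(R₁ - 1) / 2, by linarith, fun z hz _ => ?_⟩
    by_contra hcon
    push_neg at hcon
    have hfzK : f z ∈ K := ⟨hcon.1, hcon.2⟩
    have : z ∈ P := by
      refine ⟨f z, hfzK, ?_⟩
      exact hbij.injOn.leftInvOn_invFunOn hz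
    rw [hPe] at this
    exact this
  · obtain ⟨zm, hzmP, hzm⟩ := hPcompact.exists_isMinOn hPne
      (continuous_norm.continuousOn : ContinuousOn (fun z : ℂ => ‖z‖) P)
    obtain ⟨zM, hzMP, hzM⟩ := hPcompact.exists_isMaxOn hPne
      (continuous_norm.continuousOn : ContinuousOn (fun z : ℂ => ‖z‖) P)
    have hzmA := hPA hzmP
    have hzMA := hPA hzMP
    refine ⟨min (‖zm‖ - 1) (R₁ - ‖zM‖), by
      apply lt_min <;> [linarith [hzmA.1]; linarith [hzMA.2]], fun z hz hshell => ?_⟩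
    by_contra hcon
    push_neg at hcon
    have hfzK : f z ∈ K := ⟨hcon.1, hcon.2⟩
    have hzP : z ∈ P := ⟨f z, hfzK, hbij.injOn.leftInvOn_invFunOn hz⟩
    rcases hshell with h | h
    · have h1 : ‖zm‖ ≤ ‖z‖ := hzm hzP
      have h2 : min (‖zm‖ - 1) (R₁ - ‖zM‖) ≤ ‖zm‖ - 1 := min_le_left _ _
      linarith
    · have h1 : ‖z‖ ≤ ‖zM‖ := hzM hzP
      have h2 : min (‖zm‖ - 1) (R₁ - ‖zM‖) ≤ R₁ - ‖zM‖ := min_le_right _ _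
      linarith
end

section
variable (R₁ R₂ : ℝ) (f : ℂ → ℂ)

-- both shells map low: contradiction with surjectivity
lemma noBothLow (hR₁ : 1 < R₁) (hR₂ : 1 < R₂)
    (hf : ∀ z ∈ {z : ℂ | 1 < ‖z‖ ∧ ‖z‖ < R₁}, DifferentiableAt ℂ f z)
    (hbij : Set.BijOn f {z : ℂ | 1 < ‖z‖ ∧ ‖z‖ < R₁} {z : ℂ | 1 < ‖z‖ ∧ ‖z‖ < R₂})
    (a b : ℝ) (ha1 : 1 < a) (haR : a < R₂) (hbR : b < R₂)
    (hin : ∃ δ > 0, ∀ z ∈ {z : ℂ | 1 < ‖z‖ ∧ ‖z‖ < R₁}, ‖z‖ < 1 + δ → ‖f z‖ < a)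
    (hout : ∃ δ > 0, ∀ z ∈ {z : ℂ | 1 < ‖z‖ ∧ ‖z‖ < R₁}, R₁ - δ < ‖z‖ → ‖f z‖ < b) :
    False := by
  set A : Set ℂ := {z : ℂ | 1 < ‖z‖ ∧ ‖z‖ < R₁} with hA
  obtain ⟨δ₁, hδ₁0, hδ₁⟩ := hin
  obtain ⟨δ₂, hδ₂0, hδ₂⟩ := hout
  set δ : ℝ := min δ₁ δ₂ with hδ
  have hδ0 : 0 < δ := lt_min hδ₁0 hδ₂0
  set B : Set ℂ := {z : ℂ | 1 + δ / 2 ≤ ‖z‖ ∧ ‖z‖ ≤ R₁ - δ / 2} with hB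
  have hBA : B ⊆ A := fun z hz => ⟨by linarith [hz.1], by linarith [hz.2]⟩
  -- a uniform bound c < R₂ on ‖f z‖
  have hbound : ∃ c, 1 < c ∧ c < R₂ ∧ ∀ z ∈ A, ‖f z‖ < c := by
    have hcases : ∀ z ∈ A, z ∈ B ∨ ‖f z‖ < max a b := by
      intro z hz
      by_cases h1 : ‖z‖ < 1 + δ / 2
      · exact Or.inr (lt_of_lt_of_le (hδ₁ z hz (by have := min_le_left δ₁ δ₂; linarith))
          (le_max_left _ _))
      by_cases h2 : R₁ - δ / 2 < ‖z‖
      · exact Or.inr (lt_of_lt_of_le (hδ₂ z hz (by have := min_le_right δ₁ δ₂; linarith))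
          (le_max_right _ _))
      · push_neg at h1 h2
        exact Or.inl ⟨h1, h2⟩
    rcases B.eq_empty_or_nonempty with hBe | hBne
    · refine ⟨(max a b + R₂) / 2, by
        have := le_max_left a b; linarith, by
        have : max a b < R₂ := max_lt haR hbR; linarith, fun z hz => ?_⟩
      rcases hcases z hz with h | h
      · rw [hBe] at h; exact absurd h (notMem_empty z)
      · have : max a b < R₂ := max_lt haR hbR
        linarith [h]
    · have hBcompact : IsCompact B := by
        apply Metric.isCompact_of_isClosed_isBounded
        · have : B = (fun w : ℂ => ‖w‖) ⁻¹' (Icc (1 + δ/2) (R₁ - δ/2)) := rfl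
          rw [this]; exact isClosed_Icc.preimage continuous_norm
        · apply (Metric.isBounded_closedBall (x := (0:ℂ)) (r := R₁ - δ/2)).subset
          intro w hw
          simpa [Metric.mem_closedBall, Complex.dist_eq] using hw.2
      have hfc : ContinuousOn (fun z => ‖f z‖) B := fun z hz =>
        ((hf z (hBA hz)).continuousAt.norm).continuousWithinAt
      obtain ⟨zM, hzMB, hzM⟩ := hBcompact.exists_isMaxOn hBne hfc
      have hMR : ‖f zM‖ < R₂ := (hbij.mapsTo (hBA hzMB)).2
      refine ⟨(max (max a b) ‖f zM‖ + R₂) / 2, by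
        have h3 := le_max_left a b
        have h4 := le_max_left (max a b) ‖f zM‖
        linarith, by
        have : max (max a b) ‖f zM‖ < R₂ := max_lt (max_lt haR hbR) hMR
        linarith, fun z hz => ?_⟩
      rcases hcases z hz with h | h
      · have h1 : ‖f z‖ ≤ ‖f zM‖ := hzM h
        have h2 : ‖f zM‖ ≤ max (max a b) ‖f zM‖ := le_max_right _ _
        have : max (max a b) ‖f zM‖ < R₂ := max_lt (max_lt haR hbR) hMR
        linarith
      · have h2 : max a b ≤ max (max a b) ‖f zM‖ := le_max_left _ _
        have : max (max a b) ‖f zM‖ < R₂ := max_lt (max_lt haR hbR) hMR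
        linarith
  obtain ⟨c, hc1, hcR, hc⟩ := hbound
  -- a point of A₂ with norm ≥ c : contradiction
  set w₀ : ℂ := (((c + R₂) / 2 : ℝ) : ℂ) with hw₀
  have hw₀n : ‖w₀‖ = (c + R₂) / 2 := by
    rw [hw₀, Complex.norm_real, Real.norm_eq_abs, abs_of_pos (by linarith)]
  have hw₀A₂ : w₀ ∈ {w : ℂ | 1 < ‖w‖ ∧ ‖w‖ < R₂} := by
    constructor <;> rw [hw₀n] <;> linarith
  obtain ⟨z, hzA, hfz⟩ := hbij.surjOn hw₀A₂
  have := hc z hzA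
  rw [hfz, hw₀n] at this
  linarith

-- both shells map high: contradiction with surjectivity
lemma noBothHigh (hR₁ : 1 < R₁) (hR₂ : 1 < R₂)
    (hf : ∀ z ∈ {z : ℂ | 1 < ‖z‖ ∧ ‖z‖ < R₁}, DifferentiableAt ℂ f z)
    (hbij : Set.BijOn f {z : ℂ | 1 < ‖z‖ ∧ ‖z‖ < R₁} {z : ℂ | 1 < ‖z‖ ∧ ‖z‖ < R₂})
    (a b : ℝ) (ha1 : 1 < a) (hb1 : 1 < b)
    (hin : ∃ δ > 0, ∀ z ∈ {z : ℂ | 1 < ‖z‖ ∧ ‖z‖ < R₁}, ‖z‖ < 1 + δ → a < ‖f z‖)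
    (hout : ∃ δ > 0, ∀ z ∈ {z : ℂ | 1 < ‖z‖ ∧ ‖z‖ < R₁}, R₁ - δ < ‖z‖ → b < ‖f z‖) :
    False := by
  set A : Set ℂ := {z : ℂ | 1 < ‖z‖ ∧ ‖z‖ < R₁} with hA
  obtain ⟨δ₁, hδ₁0, hδ₁⟩ := hin
  obtain ⟨δ₂, hδ₂0, hδ₂⟩ := hout
  set δ : ℝ := min δ₁ δ₂ with hδ
  have hδ0 : 0 < δ := lt_min hδ₁0 hδ₂0
  set B : Set ℂ := {z : ℂ | 1 + δ / 2 ≤ ‖z‖ ∧ ‖z‖ ≤ R₁ - δ / 2} with hB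
  have hBA : B ⊆ A := fun z hz => ⟨by linarith [hz.1], by linarith [hz.2]⟩
  have hbound : ∃ c, 1 < c ∧ ∀ z ∈ A, c < ‖f z‖ := by
    have hcases : ∀ z ∈ A, z ∈ B ∨ min a b < ‖f z‖ := by
      intro z hz
      by_cases h1 : ‖z‖ < 1 + δ / 2
      · exact Or.inr (lt_of_le_of_lt (min_le_left a b)
          (hδ₁ z hz (by have := min_le_left δ₁ δ₂; linarith)))
      by_cases h2 : R₁ - δ / 2 < ‖z‖
      · exact Or.inr (lt_of_le_of_lt (min_le_right a b)
          (hδ₂ z hz (by have := min_le_right δ₁ δ₂; linarith)))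
      · push_neg at h1 h2
        exact Or.inl ⟨h1, h2⟩
    rcases B.eq_empty_or_nonempty with hBe | hBne
    · refine ⟨(1 + min a b) / 2, by
        have := lt_min ha1 hb1; linarith, fun z hz => ?_⟩
      rcases hcases z hz with h | h
      · rw [hBe] at h; exact absurd h (notMem_empty z)
      · have := lt_min ha1 hb1; linarith
    · have hBcompact : IsCompact B := by
        apply Metric.isCompact_of_isClosed_isBounded
        · have : B = (fun w : ℂ => ‖w‖) ⁻¹' (Icc (1 + δ/2) (R₁ - δ/2)) := rfl
          rw [this]; exact isClosed_Icc.preimage continuous_norm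
        · apply (Metric.isBounded_closedBall (x := (0:ℂ)) (r := R₁ - δ/2)).subset
          intro w hw
          simpa [Metric.mem_closedBall, Complex.dist_eq] using hw.2
      have hfc : ContinuousOn (fun z => ‖f z‖) B := fun z hz =>
        ((hf z (hBA hz)).continuousAt.norm).continuousWithinAt
      obtain ⟨zm, hzmB, hzm⟩ := hBcompact.exists_isMinOn hBne hfc
      have hm1 : 1 < ‖f zm‖ := (hbij.mapsTo (hBA hzmB)).1
      refine ⟨(1 + min (min a b) ‖f zm‖) / 2, by
        have := lt_min (lt_min ha1 hb1) hm1; linarith, fun z hz => ?_⟩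
      rcases hcases z hz with h | h
      · have h1 : ‖f zm‖ ≤ ‖f z‖ := hzm h
        have h2 : min (min a b) ‖f zm‖ ≤ ‖f zm‖ := min_le_right _ _
        have := lt_min (lt_min ha1 hb1) hm1
        linarith
      · have h2 : min (min a b) ‖f zm‖ ≤ min a b := min_le_left _ _
        have := lt_min (lt_min ha1 hb1) hm1
        linarith
  obtain ⟨c, hc1, hc⟩ := hbound
  set w₀ : ℂ := (((1 + c) / 2 : ℝ) : ℂ) with hw₀
  have hw₀n : ‖w₀‖ = (1 + c) / 2 := by
    rw [hw₀, Complex.norm_real, Real.norm_eq_abs, abs_of_pos (by linarith)]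
  have hcR : c < R₂ := by
    -- c < ‖f z‖ < R₂ for some z; A nonempty
    have hne : (((1 + R₁)/2 : ℝ) : ℂ) ∈ A := by
      constructor <;> rw [Complex.norm_real, Real.norm_eq_abs, abs_of_pos (by linarith)] <;>
        linarith
    have h1 := hc _ hne
    have h2 := (hbij.mapsTo hne).2
    linarith
  have hw₀A₂ : w₀ ∈ {w : ℂ | 1 < ‖w‖ ∧ ‖w‖ < R₂} := by
    constructor <;> rw [hw₀n] <;> linarith
  obtain ⟨z, hzA, hfz⟩ := hbij.surjOn hw₀A₂
  have := hc z hzA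
  rw [hfz, hw₀n] at this
  linarith
end

section
variable (R₁ R₂ : ℝ) (f : ℂ → ℂ)

lemma dichoInner (hR₁ : 1 < R₁) (hR₂ : 1 < R₂)
    (hf : ∀ z ∈ {z : ℂ | 1 < ‖z‖ ∧ ‖z‖ < R₁}, DifferentiableAt ℂ f z)
    (hbij : Set.BijOn f {z : ℂ | 1 < ‖z‖ ∧ ‖z‖ < R₁} {z : ℂ | 1 < ‖z‖ ∧ ‖z‖ < R₂})
    (ε : ℝ) (hε0 : 0 < ε) (hεR : 1 + ε < R₂ - ε) :
    (∃ δ > 0, ∀ z ∈ {z : ℂ | 1 < ‖z‖ ∧ ‖z‖ < R₁}, ‖z‖ < 1 + δ → ‖f z‖ < 1 + ε) ∨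
    (∃ δ > 0, ∀ z ∈ {z : ℂ | 1 < ‖z‖ ∧ ‖z‖ < R₁}, ‖z‖ < 1 + δ → R₂ - ε < ‖f z‖) := by
  set A : Set ℂ := {z : ℂ | 1 < ‖z‖ ∧ ‖z‖ < R₁} with hA
  obtain ⟨δ₀, hδ₀0, hδ₀⟩ := shellF R₁ R₂ f hR₁ hR₂ hf hbij ε hε0 hεR
  set δ : ℝ := min δ₀ (R₁ - 1) with hδ
  have hδ0 : 0 < δ := lt_min hδ₀0 (by linarith)
  set S : Set ℂ := {z : ℂ | 1 < ‖z‖ ∧ ‖z‖ < 1 + δ} with hS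
  have hSA : S ⊆ A := fun z hz =>
    ⟨hz.1, lt_of_lt_of_le hz.2 (by have := min_le_right δ₀ (R₁ - 1); linarith)⟩
  have hSdicho : ∀ z ∈ S, ‖f z‖ < 1 + ε ∨ R₂ - ε < ‖f z‖ := fun z hz =>
    hδ₀ z (hSA hz) (Or.inl (lt_of_lt_of_le hz.2 (by have := min_le_left δ₀ (R₁-1); linarith)))
  set T : Set ℝ := (fun z => ‖f z‖) '' S with hT
  have hTconn : IsPreconnected T :=
    (ann_preconn 1 (1 + δ) zero_le_one).image _ (fun z hz =>
      ((hf z (hSA hz)).continuousAt.norm).continuousWithinAt)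
  have hTsub : T ⊆ Iio (1 + ε) ∪ Ioi (R₂ - ε) := by
    rintro t ⟨z, hz, rfl⟩
    rcases hSdicho z hz with h | h
    · exact Or.inl h
    · exact Or.inr h
  have hdisj : Disjoint (Iio (1 + ε)) (Ioi (R₂ - ε)) := by
    rw [Set.disjoint_left]
    intro t ht1 ht2
    simp only [mem_Iio] at ht1
    simp only [mem_Ioi] at ht2
    linarith
  by_cases hcase : (T ∩ Iio (1 + ε)).Nonempty
  · left
    have hsubT : T ⊆ Iio (1 + ε) :=
      hTconn.subset_left_of_subset_union isOpen_Iio isOpen_Ioi hdisj hTsub hcase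
    exact ⟨δ, hδ0, fun z hz hzn => hsubT ⟨z, ⟨hz.1, hzn⟩, rfl⟩⟩
  · right
    refine ⟨δ, hδ0, fun z hz hzn => ?_⟩
    have hzS : z ∈ S := ⟨hz.1, hzn⟩
    have htT : ‖f z‖ ∈ T := ⟨z, hzS, rfl⟩
    rcases hTsub htT with h | h
    · exact absurd ⟨htT, h⟩ (by rw [Set.not_nonempty_iff_eq_empty] at hcase; rw [hcase]; simp
        : ‖f z‖ ∉ T ∩ Iio (1 + ε))
    · exact h

lemma dichoOuter (hR₁ : 1 < R₁) (hR₂ : 1 < R₂)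
    (hf : ∀ z ∈ {z : ℂ | 1 < ‖z‖ ∧ ‖z‖ < R₁}, DifferentiableAt ℂ f z)
    (hbij : Set.BijOn f {z : ℂ | 1 < ‖z‖ ∧ ‖z‖ < R₁} {z : ℂ | 1 < ‖z‖ ∧ ‖z‖ < R₂})
    (ε : ℝ) (hε0 : 0 < ε) (hεR : 1 + ε < R₂ - ε) :
    (∃ δ > 0, ∀ z ∈ {z : ℂ | 1 < ‖z‖ ∧ ‖z‖ < R₁}, R₁ - δ < ‖z‖ → ‖f z‖ < 1 + ε) ∨
    (∃ δ > 0, ∀ z ∈ {z : ℂ | 1 < ‖z‖ ∧ ‖z‖ < R₁}, R₁ - δ < ‖z‖ → R₂ - ε < ‖f z‖) := by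
  set A : Set ℂ := {z : ℂ | 1 < ‖z‖ ∧ ‖z‖ < R₁} with hA
  obtain ⟨δ₀, hδ₀0, hδ₀⟩ := shellF R₁ R₂ f hR₁ hR₂ hf hbij ε hε0 hεR
  set δ : ℝ := min δ₀ (R₁ - 1) with hδ
  have hδ0 : 0 < δ := lt_min hδ₀0 (by linarith)
  set S : Set ℂ := {z : ℂ | R₁ - δ < ‖z‖ ∧ ‖z‖ < R₁} with hS
  have hSA : S ⊆ A := fun z hz =>
    ⟨by have := min_le_right δ₀ (R₁ - 1); have := hz.1; simp only [hδ] at this ⊢; linarith,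
     hz.2⟩
  have hSdicho : ∀ z ∈ S, ‖f z‖ < 1 + ε ∨ R₂ - ε < ‖f z‖ := fun z hz =>
    hδ₀ z (hSA hz) (Or.inr (by
      have h1 := hz.1
      have := min_le_left δ₀ (R₁-1)
      simp only [hδ] at h1
      linarith))
  set T : Set ℝ := (fun z => ‖f z‖) '' S with hT
  have hTconn : IsPreconnected T :=
    (ann_preconn (R₁ - δ) R₁ (by have := min_le_right δ₀ (R₁-1); simp only [hδ]; linarith)).image
      _ (fun z hz => ((hf z (hSA hz)).continuousAt.norm).continuousWithinAt)
  have hTsub : T ⊆ Iio (1 + ε) ∪ Ioi (R₂ - ε) := by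
    rintro t ⟨z, hz, rfl⟩
    rcases hSdicho z hz with h | h
    · exact Or.inl h
    · exact Or.inr h
  have hdisj : Disjoint (Iio (1 + ε)) (Ioi (R₂ - ε)) := by
    rw [Set.disjoint_left]
    intro t ht1 ht2
    simp only [mem_Iio] at ht1
    simp only [mem_Ioi] at ht2
    linarith
  by_cases hcase : (T ∩ Iio (1 + ε)).Nonempty
  · left
    have hsubT : T ⊆ Iio (1 + ε) :=
      hTconn.subset_left_of_subset_union isOpen_Iio isOpen_Ioi hdisj hTsub hcase
    exact ⟨δ, hδ0, fun z hz hzn => hsubT ⟨z, ⟨hzn, hz.2⟩, rfl⟩⟩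
  · right
    refine ⟨δ, hδ0, fun z hz hzn => ?_⟩
    have hzS : z ∈ S := ⟨hzn, hz.2⟩
    have htT : ‖f z‖ ∈ T := ⟨z, hzS, rfl⟩
    rcases hTsub htT with h | h
    · exact absurd ⟨htT, h⟩ (by rw [Set.not_nonempty_iff_eq_empty] at hcase; rw [hcase]; simp
        : ‖f z‖ ∉ T ∩ Iio (1 + ε))
    · exact h
end

lemma boundaryF (R₁ R₂ : ℝ) (f : ℂ → ℂ) (hR₁ : 1 < R₁) (hR₂ : 1 < R₂)
    (hf : ∀ z ∈ {z : ℂ | 1 < ‖z‖ ∧ ‖z‖ < R₁}, DifferentiableAt ℂ f z)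
    (hbij : Set.BijOn f {z : ℂ | 1 < ‖z‖ ∧ ‖z‖ < R₁} {z : ℂ | 1 < ‖z‖ ∧ ‖z‖ < R₂}) :
    ((∀ ε > 0, ∃ δ > 0, ∀ z ∈ {z : ℂ | 1 < ‖z‖ ∧ ‖z‖ < R₁}, ‖z‖ < 1 + δ → ‖f z‖ < 1 + ε) ∧
     (∀ ε > 0, ∃ δ > 0, ∀ z ∈ {z : ℂ | 1 < ‖z‖ ∧ ‖z‖ < R₁}, R₁ - δ < ‖z‖ → R₂ - ε < ‖f z‖)) ∨
    ((∀ ε > 0, ∃ δ > 0, ∀ z ∈ {z : ℂ | 1 < ‖z‖ ∧ ‖z‖ < R₁}, ‖z‖ < 1 + δ → R₂ - ε < ‖f z‖) ∧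
     (∀ ε > 0, ∃ δ > 0, ∀ z ∈ {z : ℂ | 1 < ‖z‖ ∧ ‖z‖ < R₁}, R₁ - δ < ‖z‖ → ‖f z‖ < 1 + ε)) := by
  set A : Set ℂ := {z : ℂ | 1 < ‖z‖ ∧ ‖z‖ < R₁} with hA
  have hpt : ∀ d : ℝ, 0 < d → ∃ z ∈ A, ‖z‖ < 1 + d := by
    intro d hd
    set c : ℝ := 1 + (min d (R₁ - 1)) / 2 with hc
    have h1 : 0 < min d (R₁ - 1) := lt_min hd (by linarith)
    have h2 : min d (R₁-1) ≤ R₁ - 1 := min_le_right _ _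
    have h3 : min d (R₁-1) ≤ d := min_le_left _ _
    have hcn : ‖((c:ℝ):ℂ)‖ = c := by
      rw [Complex.norm_real, Real.norm_eq_abs, abs_of_pos (by rw [hc]; linarith)]
    exact ⟨((c:ℝ):ℂ), ⟨by rw [hcn, hc]; linarith, by rw [hcn, hc]; linarith⟩,
      by rw [hcn, hc]; linarith⟩
  set ε₁ : ℝ := (R₂ - 1) / 4 with hε₁
  have hε₁0 : 0 < ε₁ := by rw [hε₁]; linarith
  have hε₁R : 1 + ε₁ < R₂ - ε₁ := by rw [hε₁]; linarith
  have hsmall : ∀ ε : ℝ, 0 < ε → 0 < min ε ε₁ ∧ 1 + min ε ε₁ < R₂ - min ε ε₁ := by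
    intro ε hε
    have h1 : min ε ε₁ ≤ ε₁ := min_le_right _ _
    exact ⟨lt_min hε hε₁0, by linarith⟩
  rcases dichoInner R₁ R₂ f hR₁ hR₂ hf hbij ε₁ hε₁0 hε₁R with hIL | hIH
  · left
    constructor
    · intro ε hε
      obtain ⟨hε'0, hε'R⟩ := hsmall ε hε
      have hle : min ε ε₁ ≤ ε := min_le_left _ _
      rcases dichoInner R₁ R₂ f hR₁ hR₂ hf hbij (min ε ε₁) hε'0 hε'R with h | h
      · obtain ⟨δ, hδ0, hδ⟩ := h
        exact ⟨δ, hδ0, fun z hz hn => lt_of_lt_of_le (hδ z hz hn) (by linarith)⟩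
      · exfalso
        obtain ⟨δ, hδ0, hδ⟩ := hIL
        obtain ⟨δ', hδ'0, hδ'⟩ := h
        obtain ⟨z, hzA, hzn⟩ := hpt (min δ δ') (lt_min hδ0 hδ'0)
        have h1 := hδ z hzA (by have := min_le_left δ δ'; linarith)
        have h2 := hδ' z hzA (by have := min_le_right δ δ'; linarith)
        have h3 : min ε ε₁ ≤ ε₁ := min_le_right _ _
        linarith
    · intro ε hε
      obtain ⟨hε'0, hε'R⟩ := hsmall ε hε
      have hle : min ε ε₁ ≤ ε := min_le_left _ _
      rcases dichoOuter R₁ R₂ f hR₁ hR₂ hf hbij (min ε ε₁) hε'0 hε'R with h | h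
      · exfalso
        exact noBothLow R₁ R₂ f hR₁ hR₂ hf hbij (1 + ε₁) (1 + min ε ε₁)
          (by linarith) (by linarith) (by
            have : min ε ε₁ ≤ ε₁ := min_le_right _ _
            linarith) hIL h
      · obtain ⟨δ, hδ0, hδ⟩ := h
        exact ⟨δ, hδ0, fun z hz hn => lt_of_le_of_lt (by linarith) (hδ z hz hn)⟩
  · right
    constructor
    · intro ε hε
      obtain ⟨hε'0, hε'R⟩ := hsmall ε hε
      have hle : min ε ε₁ ≤ ε := min_le_left _ _
      rcases dichoInner R₁ R₂ f hR₁ hR₂ hf hbij (min ε ε₁) hε'0 hε'R with h | h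
      · exfalso
        obtain ⟨δ, hδ0, hδ⟩ := hIH
        obtain ⟨δ', hδ'0, hδ'⟩ := h
        obtain ⟨z, hzA, hzn⟩ := hpt (min δ δ') (lt_min hδ0 hδ'0)
        have h1 := hδ z hzA (by have := min_le_left δ δ'; linarith)
        have h2 := hδ' z hzA (by have := min_le_right δ δ'; linarith)
        have h3 : min ε ε₁ ≤ ε₁ := min_le_right _ _
        linarith
      · obtain ⟨δ, hδ0, hδ⟩ := h
        exact ⟨δ, hδ0, fun z hz hn => lt_of_le_of_lt (by linarith) (hδ z hz hn)⟩
    · intro ε hε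
      obtain ⟨hε'0, hε'R⟩ := hsmall ε hε
      have hle : min ε ε₁ ≤ ε := min_le_left _ _
      rcases dichoOuter R₁ R₂ f hR₁ hR₂ hf hbij (min ε ε₁) hε'0 hε'R with h | h
      · obtain ⟨δ, hδ0, hδ⟩ := h
        exact ⟨δ, hδ0, fun z hz hn => lt_of_lt_of_le (hδ z hz hn) (by linarith)⟩
      · exfalso
        have h3 : min ε ε₁ ≤ ε₁ := min_le_right _ _
        exact noBothHigh R₁ R₂ f hR₁ hR₂ hf hbij (R₂ - ε₁) (R₂ - min ε ε₁)
          (by linarith) (by linarith) hIH h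

lemma keyF (R₁ R₂ : ℝ) (f : ℂ → ℂ) (hR₁ : 1 < R₁) (hR₂ : 1 < R₂)
    (hf : ∀ z ∈ {z : ℂ | 1 < ‖z‖ ∧ ‖z‖ < R₁}, DifferentiableAt ℂ f z)
    (hbij : Set.BijOn f {z : ℂ | 1 < ‖z‖ ∧ ‖z‖ < R₁} {z : ℂ | 1 < ‖z‖ ∧ ‖z‖ < R₂})
    (hinner : ∀ ε > 0, ∃ δ > 0, ∀ z ∈ {z : ℂ | 1 < ‖z‖ ∧ ‖z‖ < R₁},
      ‖z‖ < 1 + δ → ‖f z‖ < 1 + ε)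
    (houter : ∀ ε > 0, ∃ δ > 0, ∀ z ∈ {z : ℂ | 1 < ‖z‖ ∧ ‖z‖ < R₁},
      R₁ - δ < ‖z‖ → R₂ - ε < ‖f z‖) :
    R₁ = R₂ := by
  set s : ℝ := Real.log R₂ / Real.log R₁ with hs
  have hs0 : 0 < s := div_pos (Real.log_pos hR₂) (Real.log_pos hR₁)
  have hfne : ∀ z ∈ {z : ℂ | 1 < ‖z‖ ∧ ‖z‖ < R₁}, f z ≠ 0 := by
    intro z hz h
    have := (hbij.mapsTo hz).1
    rw [h] at this; norm_num at this
  have hnorm := fun z hz => normEq R₁ R₂ hR₁ hR₂ f hf hbij.mapsTo hinner houter z hz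
  have hderiv := derivEq R₁ f s hf hfne hnorm
  have hs1 : s = 1 := sEqOne R₁ hR₁ f s hs0 hf hfne hderiv hbij.injOn
  have hlog : Real.log R₁ = Real.log R₂ := by
    have hne : Real.log R₁ ≠ 0 := (Real.log_pos hR₁).ne'
    rw [hs, div_eq_one_iff_eq hne] at hs1
    linarith [hs1]
  calc R₁ = Real.exp (Real.log R₁) := (Real.exp_log (by linarith)).symm
    _ = Real.exp (Real.log R₂) := by rw [hlog]
    _ = R₂ := Real.exp_log (by linarith)

/-- **Conformal rigidity of round annuli.**
Let `A₁ = {z : ℂ | 1 < ‖z‖ < R₁}` and `A₂ = {z : ℂ | 1 < ‖z‖ < R₂}` with `R₁, R₂ > 1`.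
If some holomorphic map (differentiable at every point of `A₁`) maps `A₁` bijectively
onto `A₂`, then `R₁ = R₂`. -/
theorem round_annuli_conformally_equivalent_iff
    (R₁ R₂ : ℝ) (hR₁ : 1 < R₁) (hR₂ : 1 < R₂) (f : ℂ → ℂ)
    (hf : ∀ z ∈ {z : ℂ | 1 < ‖z‖ ∧ ‖z‖ < R₁}, DifferentiableAt ℂ f z)
    (hbij : Set.BijOn f {z : ℂ | 1 < ‖z‖ ∧ ‖z‖ < R₁} {z : ℂ | 1 < ‖z‖ ∧ ‖z‖ < R₂}) :
    R₁ = R₂ := by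
  rcases boundaryF R₁ R₂ f hR₁ hR₂ hf hbij with ⟨hin, hout⟩ | ⟨hinflip, houtflip⟩
  · exact keyF R₁ R₂ f hR₁ hR₂ hf hbij hin hout
  · set A : Set ℂ := {z : ℂ | 1 < ‖z‖ ∧ ‖z‖ < R₁} with hA
    set B : Set ℂ := {w : ℂ | 1 < ‖w‖ ∧ ‖w‖ < R₂} with hB
    have hfne : ∀ z ∈ A, f z ≠ 0 := by
      intro z hz h
      have := (hbij.mapsTo hz).1
      rw [h] at this; norm_num at this
    have hR₂0 : (0:ℝ) < R₂ := by linarith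
    set F : ℂ → ℂ := fun z => (R₂ : ℂ) / f z with hF
    have hFdiff : ∀ z ∈ A, DifferentiableAt ℂ F z := fun z hz =>
      (differentiableAt_const _).div (hf z hz) (hfne z hz)
    -- the inversion w ↦ R₂ / w is a bijection of B
    have hinvnorm : ∀ w : ℂ, w ∈ B → ‖(R₂:ℂ)/w‖ = R₂ / ‖w‖ := by
      intro w hw
      rw [norm_div, Complex.norm_real, Real.norm_eq_abs, abs_of_pos hR₂0]
    have hinvmem : ∀ w : ℂ, w ∈ B → (R₂:ℂ)/w ∈ B := by
      intro w hw
      have h1 := hw.1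
      have h2 := hw.2
      have hw0 : (0:ℝ) < ‖w‖ := by linarith
      constructor
      · rw [hinvnorm w hw]
        rw [lt_div_iff₀ hw0]; linarith
      · rw [hinvnorm w hw]
        rw [div_lt_iff₀ hw0]; nlinarith
    have hIbij : Set.BijOn (fun w : ℂ => (R₂:ℂ)/w) B B := by
      refine ⟨fun w hw => hinvmem w hw, ?_, ?_⟩
      · intro w hw w' hw' heq
        have hwne : w ≠ 0 := by
          intro h; rw [h] at hw; have := hw.1; norm_num at this
        have hw'ne : w' ≠ 0 := by
          intro h; rw [h] at hw'; have := hw'.1; norm_num at this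
        have hR₂ne : ((R₂:ℝ):ℂ) ≠ 0 := by
          simp only [ne_eq, Complex.ofReal_eq_zero]; linarith
        rw [div_eq_div_iff hwne hw'ne] at heq
        exact (mul_left_cancel₀ hR₂ne heq).symm
      · intro w hw
        refine ⟨(R₂:ℂ)/w, hinvmem w hw, ?_⟩
        have hwne : w ≠ 0 := by
          intro h; rw [h] at hw; have := hw.1; norm_num at this
        have hR₂ne : ((R₂:ℝ):ℂ) ≠ 0 := by
          simp only [ne_eq, Complex.ofReal_eq_zero]; linarith
        field_simp
    have hFbij : Set.BijOn F A B := by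
      have := hIbij.comp hbij
      convert this using 1
      rfl
    have hFinner : ∀ ε > 0, ∃ δ > 0, ∀ z ∈ A, ‖z‖ < 1 + δ → ‖F z‖ < 1 + ε := by
      intro ε hε
      have hε' : 0 < R₂ - R₂ / (1 + ε) := by
        have h1 : R₂ / (1 + ε) < R₂ / 1 := by
          apply div_lt_div_of_pos_left hR₂0 one_pos
          linarith
        rw [div_one] at h1
        linarith
      obtain ⟨δ, hδ0, hδ⟩ := hinflip (R₂ - R₂ / (1 + ε)) hε'
      refine ⟨δ, hδ0, fun z hz hn => ?_⟩
      have h1 := hδ z hz hn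
      have h2 : R₂ - (R₂ - R₂ / (1 + ε)) = R₂ / (1 + ε) := by ring
      rw [h2] at h1
      have hfn : (0:ℝ) < ‖f z‖ := by
        have := (hbij.mapsTo hz).1; linarith
      rw [hF]
      show ‖(R₂:ℂ) / f z‖ < 1 + ε
      rw [norm_div, Complex.norm_real, Real.norm_eq_abs, abs_of_pos hR₂0]
      rw [div_lt_iff₀ hfn]
      have h3 : R₂ / (1 + ε) * (1 + ε) = R₂ := by field_simp
      nlinarith [h1, hε]
    have hFouter : ∀ ε > 0, ∃ δ > 0, ∀ z ∈ A, R₁ - δ < ‖z‖ → R₂ - ε < ‖F z‖ := by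
      intro ε hε
      by_cases hcase : R₂ - ε < 1
      · exact ⟨1, one_pos, fun z hz _ => lt_trans hcase (hFbij.mapsTo hz).1⟩
      · push_neg at hcase
        have hεR : 0 < R₂ - ε := by linarith
        have hε'0 : 0 < R₂ / (R₂ - ε) - 1 := by
          rw [lt_sub_iff_add_lt, zero_add, lt_div_iff₀ hεR]
          nlinarith
        obtain ⟨δ, hδ0, hδ⟩ := houtflip (R₂ / (R₂ - ε) - 1) hε'0
        refine ⟨δ, hδ0, fun z hz hn => ?_⟩
        have h1 := hδ z hz hn
        have h2 : 1 + (R₂ / (R₂ - ε) - 1) = R₂ / (R₂ - ε) := by ring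
        rw [h2] at h1
        have hfn : (0:ℝ) < ‖f z‖ := by
          have := (hbij.mapsTo hz).1; linarith
        rw [hF]
        show R₂ - ε < ‖(R₂:ℂ) / f z‖
        rw [norm_div, Complex.norm_real, Real.norm_eq_abs, abs_of_pos hR₂0]
        rw [lt_div_iff₀ hfn]
        have h3 : R₂ / (R₂ - ε) * (R₂ - ε) = R₂ := by field_simp
        nlinarith [h1, hεR]
    exact keyF R₁ R₂ F hR₁ hR₂ hFdiff hFbij hFinner hFouter
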